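/- Assume (H1)–(H3) and (H5). Then the effective matrix b^eff defined with the fourth-order cell correctors, b^eff_{ij} = ∫_{𝕋^d} b_{ik}(0,y)(δ_{kj} + ∂_k M_j(y)) dy, is symmetric and coercive on ℝ^d: there exists C > 0 such that b^eff_{ij}ξ_iξ_j ≥ C|ξ|² for all ξ ∈ ℝ^d. -/

import Mathlib

open MeasureTheory Filter Topology

noncomputable section

/-- First-order partial derivative `∂ᵢu`. -/
def pd {d : ℕ} (u : (Fin d → ℝ) → ℝ) (i : Fin d) (x : Fin d → ℝ) : ℝ :=
  fderiv ℝ u x (Pi.single i 1)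

/-- Second-order partial derivative `∂ᵢ∂ⱼu`. -/
def pd2 {d : ℕ} (u : (Fin d → ℝ) → ℝ) (i j : Fin d) : (Fin d → ℝ) → ℝ :=
  pd (pd u j) i

/-- Laplacian. -/
def lap {d : ℕ} (u : (Fin d → ℝ) → ℝ) (x : Fin d → ℝ) : ℝ := ∑ i, pd2 u i i x

/-- The unit cell of the torus `𝕋^d`. -/
def cube (d : ℕ) : Set (Fin d → ℝ) := {y | ∀ i, y i ∈ Set.Icc (0:ℝ) 1}

/-- `ℤ^d`-periodicity (functions on the torus `𝕋^d`). -/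
def ZPer {d : ℕ} (g : (Fin d → ℝ) → ℝ) : Prop :=
  ∀ (y : Fin d → ℝ) (m : Fin d → ℤ), g (fun i => y i + (m i : ℝ)) = g y

/-- Membership in `H²₀(Ω)`, modeled by extension by zero: `u` is (twice continuously
differentiable and) zero together with its gradient outside `Ω`. -/
def MemH20 {d : ℕ} (Ω : Set (Fin d → ℝ)) (u : (Fin d → ℝ) → ℝ) : Prop :=
  ContDiff ℝ 2 u ∧ ∀ x ∉ Ω, u x = 0 ∧ ∀ i, pd u i x = 0

/-- `L²` norm over a set. -/
def l2n {d : ℕ} (Ω : Set (Fin d → ℝ)) (f : (Fin d → ℝ) → ℝ) : ℝ :=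
  Real.sqrt (∫ x in Ω, f x ^ 2)

/-- The coefficients of the operator. -/
structure Coeffs (d : ℕ) where
  a : (Fin d → ℝ) → (Fin d → ℝ) → Fin d → Fin d → Fin d → Fin d → ℝ
  b : (Fin d → ℝ) → (Fin d → ℝ) → Fin d → Fin d → ℝ
  c : (Fin d → ℝ) → (Fin d → ℝ) → ℝ
  Λ : ℝ

/-- Local average `c̄(x) = ∫_{𝕋^d} c(x,y) dy`. -/
def cbar {d : ℕ} (P : Coeffs d) (x : Fin d → ℝ) : ℝ := ∫ y in cube d, P.c x y

/-- The Hessian matrix `H = ∇∇c̄(0)`. -/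
def Hmat {d : ℕ} (P : Coeffs d) (i j : Fin d) : ℝ := pd2 (cbar P) i j 0

/-- Hypotheses (H1)–(H4). -/
structure Hyp {d : ℕ} (Ω : Set (Fin d → ℝ)) (P : Coeffs d) : Prop where
  Λpos : 0 < P.Λ
  Ωopen : IsOpen Ω
  Ωbdd : Bornology.IsBounded Ω
  a_meas : ∀ i j k l, Measurable fun p : (Fin d → ℝ) × (Fin d → ℝ) => P.a p.1 p.2 i j k l
  b_meas : ∀ i j, Measurable fun p : (Fin d → ℝ) × (Fin d → ℝ) => P.b p.1 p.2 i j
  c_meas : Measurable fun p : (Fin d → ℝ) × (Fin d → ℝ) => P.c p.1 p.2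
  a_contx : ∀ y i j k l, Continuous fun x => P.a x y i j k l
  b_contx : ∀ y i j, Continuous fun x => P.b x y i j
  c_contx : ∀ y, ContDiff ℝ 2 fun x => P.c x y
  a_per : ∀ x i j k l, ZPer fun y => P.a x y i j k l
  b_per : ∀ x i j, ZPer fun y => P.b x y i j
  c_per : ∀ x, ZPer fun y => P.c x y
  a_bdd : ∀ x y i j k l, |P.a x y i j k l| ≤ P.Λ⁻¹
  b_bdd : ∀ x y i j, |P.b x y i j| ≤ P.Λ⁻¹
  c_bdd : ∃ M, ∀ x y, |P.c x y| ≤ M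
  a_symm : ∀ x y i j k l, P.a x y i j k l = P.a x y k l i j
  b_symm : ∀ x y i j, P.b x y i j = P.b x y j i
  a_ell : ∀ x y (ξ : Fin d → Fin d → ℝ),
    P.Λ * (∑ i, ∑ j, ξ i j ^ 2) ≤ ∑ i, ∑ j, ∑ k, ∑ l, P.a x y i j k l * ξ i j * ξ k l
  c_pos : ∀ x, ∀ᵐ y : Fin d → ℝ, 0 < P.c x y
  cbar_smooth : ContDiff ℝ 2 (cbar P)
  zero_mem : (0 : Fin d → ℝ) ∈ Ω
  cbar_min : ∀ x ∈ closure Ω, x ≠ 0 → cbar P 0 < cbar P x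
  hess_pos : ∀ ξ : Fin d → ℝ, ξ ≠ 0 → 0 < ∑ i, ∑ j, Hmat P i j * ξ i * ξ j

/-- The hypothesis (H5): uniform ellipticity of `b`. -/
def HypB {d : ℕ} (P : Coeffs d) (Λ' : ℝ) : Prop :=
  0 < Λ' ∧ ∀ x y (ξ : Fin d → ℝ),
    Λ' * (∑ i, ξ i ^ 2) ≤ ∑ i, ∑ j, P.b x y i j * ξ i * ξ j

/-- The bilinear form `A_ε` of the original problem. -/
def Aeps {d : ℕ} (P : Coeffs d) (Ω : Set (Fin d → ℝ)) (α β ε : ℝ)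
    (u v : (Fin d → ℝ) → ℝ) : ℝ :=
  (∫ x in Ω, ∑ i, ∑ j, ∑ k, ∑ l, P.a x (ε⁻¹ • x) i j k l * pd2 u i j x * pd2 v k l x)
  + ε ^ (-α) * (∫ x in Ω, ∑ i, ∑ j, P.b x (ε⁻¹ • x) i j * pd u i x * pd v j x)
  + ε ^ (-β) * (∫ x in Ω, P.c x (ε⁻¹ • x) * u x * v x)

/-- `(λ, u)` is an eigenpair of the Dirichlet spectral problem, in the weak sense. -/
def IsEigenpair {d : ℕ} (P : Coeffs d) (Ω : Set (Fin d → ℝ)) (α β ε : ℝ)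
    (lam : ℝ) (u : (Fin d → ℝ) → ℝ) : Prop :=
  MemH20 Ω u ∧ (∫ x in Ω, u x ^ 2) ≠ 0 ∧
    ∀ v, MemH20 Ω v → Aeps P Ω α β ε u v = lam * ∫ x in Ω, u x * v x

/-- An increasing enumeration (with multiplicity) of the spectrum of the Dirichlet problem,
realized by an orthogonal basis of eigenfunctions with `∫ uₖ² = c`. -/
def EigenSystem {d : ℕ} (P : Coeffs d) (Ω : Set (Fin d → ℝ)) (α β ε : ℝ)
    (lam : ℕ → ℝ) (u : ℕ → (Fin d → ℝ) → ℝ) (c : ℝ) : Prop :=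
  Monotone lam ∧ (∀ k, IsEigenpair P Ω α β ε (lam k) (u k)) ∧
  (∀ k l, (∫ x in Ω, u k x * u l x) = if k = l then c else 0) ∧
  (∀ f : (Fin d → ℝ) → ℝ, MemLp f 2 (volume.restrict Ω) →
    (∀ k, (∫ x in Ω, f x * u k x) = 0) → f =ᵐ[volume.restrict Ω] 0)

/-- Weak solution (with `C²`, periodic representative) of the cell problem
`∂ᵢⱼ(a_{ijmn}(0,y) ∂ₘₙ N_{kl}) = -∂ᵢⱼ a_{ijkl}(0,y)` on `𝕋^d`. -/
def IsCellSol {d : ℕ} (P : Coeffs d) (k l : Fin d) (N : (Fin d → ℝ) → ℝ) : Prop :=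
  ContDiff ℝ 2 N ∧ ZPer N ∧
  ∀ ψ : (Fin d → ℝ) → ℝ, ContDiff ℝ 2 ψ → ZPer ψ →
    (∫ y in cube d, ∑ i, ∑ j, ∑ m, ∑ n, P.a 0 y i j m n * pd2 N m n y * pd2 ψ i j y)
      = -∫ y in cube d, ∑ i, ∑ j, P.a 0 y i j k l * pd2 ψ i j y

/-- The effective coefficients `a^eff`. -/
def aeffOf {d : ℕ} (P : Coeffs d) (N : Fin d → Fin d → (Fin d → ℝ) → ℝ)
    (i j k l : Fin d) : ℝ :=
  ∫ y in cube d, ((∑ m, ∑ n, P.a 0 y i j m n * pd2 (N k l) m n y) + P.a 0 y i j k l)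

/-- The averaged coefficients `b̄(0)`. -/
def bbar0 {d : ℕ} (P : Coeffs d) (i j : Fin d) : ℝ := ∫ y in cube d, P.b 0 y i j

/-- Membership in `H²(ℝ^d) ∩ L²(ℝ^d, |z|²dz)` (with `C²` representative). -/
def MemH2w {d : ℕ} (u : (Fin d → ℝ) → ℝ) : Prop :=
  ContDiff ℝ 2 u ∧ MemLp u 2 (volume : Measure (Fin d → ℝ)) ∧
  (∀ i, MemLp (pd u i) 2 (volume : Measure (Fin d → ℝ))) ∧
  (∀ i j, MemLp (pd2 u i j) 2 (volume : Measure (Fin d → ℝ))) ∧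
  Integrable (fun z : Fin d → ℝ => (∑ i, z i ^ 2) * u z ^ 2)

/-- The effective bilinear form (without the `μ` zero-order term). -/
def EffForm {d : ℕ} (aeff : Fin d → Fin d → Fin d → Fin d → ℝ)
    (bb : Fin d → Fin d → ℝ) (Hm : Fin d → Fin d → ℝ)
    (u v : (Fin d → ℝ) → ℝ) : ℝ :=
  (∫ z : Fin d → ℝ, ∑ i, ∑ j, ∑ k, ∑ l, aeff i j k l * pd2 u k l z * pd2 v i j z)
  + (∫ z : Fin d → ℝ, ∑ i, ∑ j, bb i j * pd u j z * pd v i z)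
  + (∫ z : Fin d → ℝ, (1/2) * (∑ i, ∑ j, Hm i j * z i * z j) * u z * v z)

/-- `(η, v)` is an eigenpair of the effective problem
`∂ᵢⱼ(a^eff ∂ₖₗ v) - ∂ᵢ(b̄ᵢⱼ(0)∂ⱼv) + ½(Hz·z)v = ηv` on `ℝ^d`, in the weak sense. -/
def IsEffEigen {d : ℕ} (aeff : Fin d → Fin d → Fin d → Fin d → ℝ)
    (bb : Fin d → Fin d → ℝ) (Hm : Fin d → Fin d → ℝ)
    (η : ℝ) (v : (Fin d → ℝ) → ℝ) : Prop :=
  MemH2w v ∧ (∫ z : Fin d → ℝ, v z ^ 2) ≠ 0 ∧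
  ∀ φ : (Fin d → ℝ) → ℝ, ContDiff ℝ 2 φ → HasCompactSupport φ →
    EffForm aeff bb Hm v φ = η * ∫ z : Fin d → ℝ, v z * φ z

/-- Increasing enumeration of the spectrum of the effective problem with orthonormal
complete eigenfunctions. -/
def EffEigenSystem {d : ℕ} (aeff : Fin d → Fin d → Fin d → Fin d → ℝ)
    (bb : Fin d → Fin d → ℝ) (Hm : Fin d → Fin d → ℝ)
    (η : ℕ → ℝ) (v : ℕ → (Fin d → ℝ) → ℝ) : Prop :=
  Monotone η ∧ (∀ k, IsEffEigen aeff bb Hm (η k) (v k)) ∧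
  (∀ k l, (∫ z : Fin d → ℝ, v k z * v l z) = if k = l then 1 else 0) ∧
  (∀ f : (Fin d → ℝ) → ℝ, MemLp f 2 (volume : Measure (Fin d → ℝ)) →
    (∀ k, (∫ z : Fin d → ℝ, f z * v k z) = 0) → f =ᵐ[volume] 0)

/-- The rescaled domain `Ω_ε = ε^{-1/6}Ω`. -/
def Omr {d : ℕ} (Ω : Set (Fin d → ℝ)) (ε : ℝ) : Set (Fin d → ℝ) :=
  {z | (ε ^ ((1:ℝ)/6)) • z ∈ Ω}

/-- The rescaled bilinear form `A_ε` (case `β = 3α = 1`), including the shift `μ`. -/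
def Ares {d : ℕ} (P : Coeffs d) (Ω : Set (Fin d → ℝ)) (μ ε : ℝ)
    (u v : (Fin d → ℝ) → ℝ) : ℝ :=
  (∫ z in Omr Ω ε, ∑ i, ∑ j, ∑ k, ∑ l,
      P.a ((ε ^ ((1:ℝ)/6)) • z) ((ε ^ (-(5:ℝ)/6)) • z) i j k l * pd2 u k l z * pd2 v i j z)
  + (∫ z in Omr Ω ε, ∑ i, ∑ j,
      P.b ((ε ^ ((1:ℝ)/6)) • z) ((ε ^ (-(5:ℝ)/6)) • z) i j * pd u j z * pd v i z)
  + ε ^ (-(1:ℝ)/3) * (∫ z in Omr Ω ε,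
      (P.c ((ε ^ ((1:ℝ)/6)) • z) ((ε ^ (-(5:ℝ)/6)) • z) - cbar P 0) * u z * v z)
  + μ * ∫ z in Omr Ω ε, u z * v z

/-- Weak solution of the effective equation
`∂ᵢⱼ(a^eff∂ₖₗV) - ∂ᵢ(b̄ᵢⱼ∂ⱼV) + ½(Hz·z)V + μV = f` on `ℝ^d`. -/
def IsEffSol {d : ℕ} (aeff : Fin d → Fin d → Fin d → Fin d → ℝ)
    (bb : Fin d → Fin d → ℝ) (Hm : Fin d → Fin d → ℝ) (μ : ℝ)
    (f V : (Fin d → ℝ) → ℝ) : Prop :=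
  MemH2w V ∧ ∀ φ : (Fin d → ℝ) → ℝ, ContDiff ℝ 2 φ → HasCompactSupport φ →
    EffForm aeff bb Hm V φ + μ * (∫ z : Fin d → ℝ, V z * φ z) = ∫ z : Fin d → ℝ, f z * φ z

/-- Weak convergence in `L²(ℝ^d)` of a sequence of functions. -/
def WeakL2 {d : ℕ} (F : ℕ → (Fin d → ℝ) → ℝ) (f : (Fin d → ℝ) → ℝ) : Prop :=
  ∀ g : (Fin d → ℝ) → ℝ, MemLp g 2 (volume : Measure (Fin d → ℝ)) →
    Tendsto (fun n => ∫ z : Fin d → ℝ, F n z * g z) atTop (𝓝 (∫ z : Fin d → ℝ, f z * g z))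

/-- Strong convergence in `L²(ℝ^d)`. -/
def StrongL2 {d : ℕ} (F : ℕ → (Fin d → ℝ) → ℝ) (f : (Fin d → ℝ) → ℝ) : Prop :=
  Tendsto (fun n => ∫ z : Fin d → ℝ, (F n z - f z) ^ 2) atTop (𝓝 0)

/-- Weak convergence in `H²(ℝ^d)`. -/
def WeakH2 {d : ℕ} (F : ℕ → (Fin d → ℝ) → ℝ) (f : (Fin d → ℝ) → ℝ) : Prop :=
  WeakL2 F f ∧ (∀ i, WeakL2 (fun n => pd (F n) i) (pd f i)) ∧
  (∀ i j, WeakL2 (fun n => pd2 (F n) i j) (pd2 f i j))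

/-- Weak convergence in `H¹(ℝ^d)`. -/
def WeakH1 {d : ℕ} (F : ℕ → (Fin d → ℝ) → ℝ) (f : (Fin d → ℝ) → ℝ) : Prop :=
  WeakL2 F f ∧ (∀ i, WeakL2 (fun n => pd (F n) i) (pd f i))

/-- Admissible test functions `Φ(z,ζ)` for two-scale convergence: continuous, compactly
supported in `z`, periodic in `ζ`. -/
def Adm2 {d : ℕ} (Φ : (Fin d → ℝ) → (Fin d → ℝ) → ℝ) : Prop :=
  Continuous (fun p : (Fin d → ℝ) × (Fin d → ℝ) => Φ p.1 p.2) ∧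
  (∃ K : Set (Fin d → ℝ), IsCompact K ∧ ∀ z ∉ K, ∀ ζ, Φ z ζ = 0) ∧
  ∀ z, ZPer (Φ z)

/-- Two-scale convergence in `L²(ℝ^d)` at scale `ε^{5/6}` along `εs`. -/
def TwoScale {d : ℕ} (εs : ℕ → ℝ) (F : ℕ → (Fin d → ℝ) → ℝ)
    (w : (Fin d → ℝ) → (Fin d → ℝ) → ℝ) : Prop :=
  ∀ Φ, Adm2 Φ →
    Tendsto (fun n => ∫ z : Fin d → ℝ, F n z * Φ z (((εs n) ^ (-(5:ℝ)/6)) • z))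
      atTop (𝓝 (∫ z : Fin d → ℝ, ∫ ζ in cube d, w z ζ * Φ z ζ))
end

noncomputable section

/-- Hypotheses (H1)–(H3) (the parts concerning the coefficients `a` and `b`). -/
structure HypAB {d : ℕ} (P : Coeffs d) : Prop where
  Λpos : 0 < P.Λ
  a_meas : ∀ i j k l, Measurable fun p : (Fin d → ℝ) × (Fin d → ℝ) => P.a p.1 p.2 i j k l
  b_meas : ∀ i j, Measurable fun p : (Fin d → ℝ) × (Fin d → ℝ) => P.b p.1 p.2 i j
  a_contx : ∀ y i j k l, Continuous fun x => P.a x y i j k l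
  b_contx : ∀ y i j, Continuous fun x => P.b x y i j
  a_per : ∀ x i j k l, ZPer fun y => P.a x y i j k l
  b_per : ∀ x i j, ZPer fun y => P.b x y i j
  a_bdd : ∀ x y i j k l, |P.a x y i j k l| ≤ P.Λ⁻¹
  b_bdd : ∀ x y i j, |P.b x y i j| ≤ P.Λ⁻¹
  a_symm : ∀ x y i j k l, P.a x y i j k l = P.a x y k l i j
  b_symm : ∀ x y i j, P.b x y i j = P.b x y j i
  a_ell : ∀ x y (ξ : Fin d → Fin d → ℝ),
    P.Λ * (∑ i, ∑ j, ξ i j ^ 2) ≤ ∑ i, ∑ j, ∑ k, ∑ l, P.a x y i j k l * ξ i j * ξ k l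

/-- Weak (periodic, `C²`) solution of the fourth-order cell problem
`∂ᵢⱼ(a_{ijkl}(0,y)∂ₖₗMₙ) - ∂ᵢ(b_{ij}(0,y)∂ⱼMₙ) = ∂ᵢb_{ni}(0,y)` on `𝕋^d`. -/
def IsCellM {d : ℕ} (P : Coeffs d) (n : Fin d) (M : (Fin d → ℝ) → ℝ) : Prop :=
  ContDiff ℝ 2 M ∧ ZPer M ∧
  ∀ ψ : (Fin d → ℝ) → ℝ, ContDiff ℝ 2 ψ → ZPer ψ →
    (∫ y in cube d, ∑ i, ∑ j, ∑ k, ∑ l, P.a 0 y i j k l * pd2 M k l y * pd2 ψ i j y)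
    + (∫ y in cube d, ∑ i, ∑ j, P.b 0 y i j * pd M j y * pd ψ i y)
    = -∫ y in cube d, ∑ i, P.b 0 y n i * pd ψ i y

section AuxBasics

variable {d : ℕ}

lemma cube_eq_Icc (d : ℕ) : cube d = Set.Icc (0 : Fin d → ℝ) 1 := by
  ext y
  simp [cube, Set.mem_Icc, Pi.le_def, forall_and]

lemma isCompact_cube (d : ℕ) : IsCompact (cube d) := by
  rw [cube_eq_Icc]; exact isCompact_Icc

lemma measurableSet_cube (d : ℕ) : MeasurableSet (cube d) := by
  rw [cube_eq_Icc]; exact measurableSet_Icc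

lemma volume_cube (d : ℕ) : volume (cube d) = 1 := by
  rw [cube_eq_Icc, Real.volume_Icc_pi]
  simp

lemma contDiff_pd {g : (Fin d → ℝ) → ℝ} (hg : ContDiff ℝ 2 g) (k : Fin d) :
    ContDiff ℝ 1 (pd g k) := by
  have h1 : ContDiff ℝ 1 (fderiv ℝ g) := hg.fderiv_right (by norm_num)
  exact ((ContinuousLinearMap.apply ℝ ℝ (Pi.single k 1 : Fin d → ℝ)).contDiff).comp h1

lemma continuous_pd {g : (Fin d → ℝ) → ℝ} (hg : ContDiff ℝ 1 g) (k : Fin d) :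
    Continuous (pd g k) := by
  have h1 : Continuous (fderiv ℝ g) := hg.continuous_fderiv one_ne_zero
  exact ((ContinuousLinearMap.apply ℝ ℝ (Pi.single k 1 : Fin d → ℝ)).continuous).comp h1

lemma continuous_pd2 {g : (Fin d → ℝ) → ℝ} (hg : ContDiff ℝ 2 g) (k l : Fin d) :
    Continuous (pd2 g k l) :=
  continuous_pd (contDiff_pd hg l) k

end AuxBasics
section AuxPer

lemma integral_pd_cube_zero {d : ℕ} (hd : 1 ≤ d) {g : (Fin d → ℝ) → ℝ}
    (hg : ContDiff ℝ 2 g) (hper : ZPer g) (k : Fin d) :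
    ∫ y in cube d, pd g k y = 0 := by
  obtain ⟨n, rfl⟩ : ∃ n, d = n + 1 := ⟨d - 1, (Nat.succ_pred_eq_of_pos hd).symm⟩
  set a : Fin (n + 1) → ℝ := 0 with ha
  set b : Fin (n + 1) → ℝ := 1 with hb
  set f : (Fin (n + 1) → ℝ) → (Fin (n + 1) → ℝ) := fun x => Pi.single k (g x) with hf
  set f' : (Fin (n + 1) → ℝ) → (Fin (n + 1) → ℝ) →L[ℝ] (Fin (n + 1) → ℝ) :=
    fun x => ContinuousLinearMap.pi (fun i => if i = k then fderiv ℝ g x else 0) with hf'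
  have hdiv : ∀ x, (∑ i, f' x (Pi.single i 1) i) = pd g k x := by
    intro x
    have : ∀ i : Fin (n + 1), f' x (Pi.single i 1) i
        = if i = k then pd g k x else 0 := by
      intro i
      simp only [hf', ContinuousLinearMap.pi_apply]
      rcases eq_or_ne i k with rfl | h
      · simp [pd]
      · simp [h]
    simp [this]
  have hcont : Continuous (pd g k) := continuous_pd (hg.of_le one_le_two) k
  have Hd : ∀ x, HasFDerivAt f (f' x) x := by
    intro x
    apply hasFDerivAt_pi''
    intro i
    rw [ContinuousLinearMap.proj_pi]
    rcases eq_or_ne i k with rfl | h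
    · have : (fun x => f x i) = g := by
        funext z; simp [hf]
      rw [this, if_pos rfl]
      exact (hg.differentiable (by norm_num) x).hasFDerivAt
    · have : (fun x => f x i) = fun _ => (0 : ℝ) := by
        funext z; simp [hf, Pi.single_eq_of_ne h]
      rw [this, if_neg h]
      exact hasFDerivAt_const (0:ℝ) x
  have key := MeasureTheory.integral_divergence_of_hasFDerivAt_off_countable a b
    (by intro i; simp [ha, hb, zero_le_one]) f f' ∅ Set.countable_empty
    (by
      apply Continuous.continuousOn
      apply continuous_pi
      intro i
      rcases eq_or_ne i k with rfl | h
      · have : (fun x => f x i) = g := by funext z; simp [hf]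
        rw [this]; exact hg.continuous
      · have : (fun x => f x i) = fun _ => (0 : ℝ) := by
          funext z; simp [hf, Pi.single_eq_of_ne h]
        rw [this]; exact continuous_const)
    (fun x _ => Hd x)
    (by
      apply (hcont.continuousOn.integrableOn_compact isCompact_Icc).congr_fun _
        measurableSet_Icc
      intro x _; exact (hdiv x).symm)
  rw [cube_eq_Icc]
  have hint : (∫ x in Set.Icc a b, ∑ i, f' x (Pi.single i 1) i)
      = ∫ x in Set.Icc a b, pd g k x := by
    apply MeasureTheory.setIntegral_congr_fun measurableSet_Icc
    intro x _; exact hdiv x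
  rw [← ha, ← hb, ← hint, key]
  apply Finset.sum_eq_zero
  intro i _
  rcases eq_or_ne i k with rfl | h
  · have heq : ∀ x : Fin n → ℝ, f (i.insertNth (b i) x) i = f (i.insertNth (a i) x) i := by
      intro x
      have h2 : (fun j => (i.insertNth (a i) x : Fin (n+1) → ℝ) j + ((Pi.single i 1 : Fin (n+1) → ℤ) j : ℝ))
          = i.insertNth (b i) x := by
        funext j
        rcases eq_or_ne j i with rfl | hj
        · simp [ha, hb, Fin.insertNth_apply_same]
        · obtain ⟨m, rfl⟩ := Fin.exists_succAbove_eq hj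
          simp [Fin.insertNth_apply_succAbove, Pi.single_eq_of_ne (Fin.succAbove_ne i m)]
      simp only [hf, Pi.single_eq_same]
      rw [← h2, hper]
    rw [MeasureTheory.setIntegral_congr_fun measurableSet_Icc (fun x _ => heq x), sub_self]
  · have : ∀ (c : ℝ) (x : Fin n → ℝ), f (i.insertNth c x) i = 0 := by
      intro c x; simp [hf, Pi.single_eq_of_ne h]
    simp [this]

end AuxPer
section AuxInt

variable {d : ℕ}

lemma integrableOn_cube_mul {f g : (Fin d → ℝ) → ℝ} (hf : Measurable f) {C : ℝ}
    (hC : ∀ y, |f y| ≤ C) (hg : Continuous g) :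
    MeasureTheory.IntegrableOn (fun y => f y * g y) (cube d) := by
  obtain ⟨D, hD⟩ := (isCompact_cube d).exists_bound_of_continuousOn hg.continuousOn
  have hmeas : MeasureTheory.AEStronglyMeasurable (fun y => f y * g y)
      (volume.restrict (cube d)) := (hf.mul hg.measurable).aestronglyMeasurable
  have hCnn : 0 ≤ C := le_trans (abs_nonneg _) (hC 0)
  have hDnn : 0 ≤ D := by
    have h0 : (0 : Fin d → ℝ) ∈ cube d := by intro i; exact ⟨le_rfl, zero_le_one⟩
    exact le_trans (norm_nonneg _) (hD 0 h0)
  apply MeasureTheory.Integrable.mono' (g := fun _ => C * D)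
  · refine MeasureTheory.integrableOn_const ?_
    rw [volume_cube]; exact ENNReal.one_ne_top
  · exact hmeas
  · rw [MeasureTheory.ae_restrict_iff' (measurableSet_cube d)]
    apply MeasureTheory.ae_of_all
    intro y hy
    have : ‖f y * g y‖ = |f y| * ‖g y‖ := by
      rw [norm_mul]; rfl
    rw [this]
    exact mul_le_mul (hC y) (hD y hy) (norm_nonneg _) hCnn

lemma integrableOn_cube_cont {g : (Fin d → ℝ) → ℝ} (hg : Continuous g) :
    MeasureTheory.IntegrableOn g (cube d) :=
  hg.continuousOn.integrableOn_compact (isCompact_cube d)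

end AuxInt

section AuxSum

variable {ι : Type*} [Fintype ι] {α : Type*} [AddCommMonoid α]

lemma pull1 (f : ι → ι → ι → α) :
    ∑ i, ∑ n, ∑ m, f i n m = ∑ n, ∑ m, ∑ i, f i n m := by
  rw [Finset.sum_comm]
  exact Finset.sum_congr rfl fun n _ => Finset.sum_comm

lemma pull2 (f : ι → ι → ι → ι → α) :
    ∑ i, ∑ j, ∑ n, ∑ m, f i j n m = ∑ n, ∑ m, ∑ i, ∑ j, f i j n m :=
  (Finset.sum_congr rfl fun i _ => pull1 _).trans (pull1 _)

lemma pull3 (f : ι → ι → ι → ι → ι → α) :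
    ∑ i, ∑ j, ∑ k, ∑ n, ∑ m, f i j k n m = ∑ n, ∑ m, ∑ i, ∑ j, ∑ k, f i j k n m :=
  (Finset.sum_congr rfl fun i _ => pull2 _).trans (pull1 _)

lemma pull4 (f : ι → ι → ι → ι → ι → ι → α) :
    ∑ i, ∑ j, ∑ k, ∑ l, ∑ n, ∑ m, f i j k l n m
      = ∑ n, ∑ m, ∑ i, ∑ j, ∑ k, ∑ l, f i j k l n m :=
  (Finset.sum_congr rfl fun i _ => pull3 _).trans (pull1 _)

lemma swap4 (f : ι → ι → ι → ι → α) :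
    ∑ i, ∑ j, ∑ k, ∑ l, f i j k l = ∑ k, ∑ l, ∑ i, ∑ j, f i j k l :=
  pull2 f

end AuxSum
section AuxQuant

variable {d : ℕ} (P : Coeffs d) (M : Fin d → (Fin d → ℝ) → ℝ)

/-- `∫ a D²Mₙ : D²Mₘ`. -/
def Aq (n m : Fin d) : ℝ :=
  ∫ y in cube d, ∑ i, ∑ j, ∑ k, ∑ l, P.a 0 y i j k l * pd2 (M n) k l y * pd2 (M m) i j y

/-- `∫ b ∇Mₙ · ∇Mₘ`. -/
def Bq (n m : Fin d) : ℝ :=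
  ∫ y in cube d, ∑ i, ∑ j, P.b 0 y i j * pd (M n) j y * pd (M m) i y

/-- `∫ bₙ· · ∇Mₘ`. -/
def Rq (n m : Fin d) : ℝ :=
  ∫ y in cube d, ∑ k, P.b 0 y n k * pd (M m) k y

/-- The effective matrix. -/
def Beff (i j : Fin d) : ℝ :=
  ∫ y in cube d, ∑ k, P.b 0 y i k * ((if k = j then (1:ℝ) else 0) + pd (M j) k y)

/-- `∫ b_{ij}`. -/
def bbar (i j : Fin d) : ℝ := ∫ y in cube d, P.b 0 y i j

variable {P M}

section WithHyp

lemma b_meas0 (hAB : HypAB P) (i k : Fin d) : Measurable fun y => P.b 0 y i k :=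
  (hAB.b_meas i k).comp (measurable_const.prodMk measurable_id)

lemma a_meas0 (hAB : HypAB P) (i j k l : Fin d) : Measurable fun y => P.a 0 y i j k l :=
  (hAB.a_meas i j k l).comp (measurable_const.prodMk measurable_id)

lemma int_b_mul (hAB : HypAB P) (i k : Fin d) {g : (Fin d → ℝ) → ℝ} (hg : Continuous g) :
    MeasureTheory.IntegrableOn (fun y => P.b 0 y i k * g y) (cube d) :=
  integrableOn_cube_mul (b_meas0 hAB i k) (fun y => hAB.b_bdd 0 y i k) hg

lemma int_a_mul (hAB : HypAB P) (i j k l : Fin d) {g : (Fin d → ℝ) → ℝ} (hg : Continuous g) :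
    MeasureTheory.IntegrableOn (fun y => P.a 0 y i j k l * g y) (cube d) :=
  integrableOn_cube_mul (a_meas0 hAB i j k l) (fun y => hAB.a_bdd 0 y i j k l) hg

lemma int_b0 (hAB : HypAB P) (i k : Fin d) :
    MeasureTheory.IntegrableOn (fun y => P.b 0 y i k) (cube d) := by
  simpa using int_b_mul hAB i k (continuous_const : Continuous fun _ : Fin d → ℝ => (1:ℝ))

lemma cell_id (hM : ∀ n, IsCellM P n (M n)) (n m : Fin d) : Aq P M n m + Bq P M n m = -Rq P M n m :=
  (hM n).2.2 (M m) (hM m).1 (hM m).2.1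

lemma beff_split (hAB : HypAB P) (hM : ∀ n, IsCellM P n (M n)) (i j : Fin d) : Beff P M i j = bbar P i j + Rq P M i j := by
  have hptw : (fun y => ∑ k, P.b 0 y i k * ((if k = j then (1:ℝ) else 0) + pd (M j) k y))
      = fun y => P.b 0 y i j + ∑ k, P.b 0 y i k * pd (M j) k y := by
    funext y
    simp only [mul_add, Finset.sum_add_distrib, mul_ite, mul_one, mul_zero]
    congr 1
    simp
  rw [Beff, hptw, MeasureTheory.integral_add (int_b0 hAB i j)]
  · rfl
  · exact MeasureTheory.integrable_finset_sum _ fun k _ =>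
      int_b_mul hAB i k (continuous_pd ((hM j).1.of_le one_le_two) k)

end WithHyp

end AuxQuant
section AuxSymm

variable {d : ℕ} {P : Coeffs d} {M : Fin d → (Fin d → ℝ) → ℝ}

lemma bbar_symm (hAB : HypAB P) (i j : Fin d) : bbar P i j = bbar P j i := by
  unfold bbar
  congr 1
  funext y
  exact hAB.b_symm 0 y i j

lemma Bq_symm (hAB : HypAB P) (n m : Fin d) : Bq P M n m = Bq P M m n := by
  unfold Bq
  congr 1
  funext y
  rw [Finset.sum_comm]
  refine Finset.sum_congr rfl fun i _ => Finset.sum_congr rfl fun j _ => ?_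
  rw [hAB.b_symm 0 y]
  ring

lemma Aq_symm (hAB : HypAB P) (n m : Fin d) : Aq P M n m = Aq P M m n := by
  unfold Aq
  congr 1
  funext y
  rw [swap4]
  refine Finset.sum_congr rfl fun k _ => Finset.sum_congr rfl fun l _ =>
    Finset.sum_congr rfl fun i _ => Finset.sum_congr rfl fun j _ => ?_
  rw [hAB.a_symm 0 y]
  ring

lemma Rq_eq (hM : ∀ n, IsCellM P n (M n)) (n m : Fin d) :
    Rq P M n m = -(Aq P M n m + Bq P M n m) := by
  rw [cell_id hM n m]; ring

lemma Beff_symm (hAB : HypAB P) (hM : ∀ n, IsCellM P n (M n)) (i j : Fin d) :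
    Beff P M i j = Beff P M j i := by
  rw [beff_split hAB hM, beff_split hAB hM, Rq_eq hM, Rq_eq hM,
    bbar_symm hAB i j, Aq_symm hAB i j, Bq_symm hAB i j]

end AuxSymm
section AuxExpand

variable {d : ℕ} {P : Coeffs d} {M : Fin d → (Fin d → ℝ) → ℝ}

lemma int_Aint (hAB : HypAB P) (hM : ∀ n, IsCellM P n (M n)) (n m : Fin d) :
    MeasureTheory.IntegrableOn
      (fun y => ∑ i, ∑ j, ∑ k, ∑ l, P.a 0 y i j k l * pd2 (M n) k l y * pd2 (M m) i j y)
      (cube d) := by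
  refine MeasureTheory.integrable_finset_sum _ fun i _ => ?_
  refine MeasureTheory.integrable_finset_sum _ fun j _ => ?_
  refine MeasureTheory.integrable_finset_sum _ fun k _ => ?_
  refine MeasureTheory.integrable_finset_sum _ fun l _ => ?_
  have := int_a_mul hAB i j k l
    ((continuous_pd2 (hM n).1 k l).mul (continuous_pd2 (hM m).1 i j))
  simpa [mul_assoc, IntegrableOn] using this

lemma int_Bint (hAB : HypAB P) (hM : ∀ n, IsCellM P n (M n)) (n m : Fin d) :
    MeasureTheory.IntegrableOn
      (fun y => ∑ i, ∑ j, P.b 0 y i j * pd (M n) j y * pd (M m) i y) (cube d) := by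
  refine MeasureTheory.integrable_finset_sum _ fun i _ => ?_
  refine MeasureTheory.integrable_finset_sum _ fun j _ => ?_
  have := int_b_mul hAB i j
    ((continuous_pd ((hM n).1.of_le one_le_two) j).mul (continuous_pd ((hM m).1.of_le one_le_two) i))
  simpa [mul_assoc, IntegrableOn] using this

lemma int_Rint (hAB : HypAB P) (hM : ∀ n, IsCellM P n (M n)) (n m : Fin d) :
    MeasureTheory.IntegrableOn
      (fun y => ∑ k, P.b 0 y n k * pd (M m) k y) (cube d) := by
  refine MeasureTheory.integrable_finset_sum _ fun k _ => ?_
  exact int_b_mul hAB n k (continuous_pd ((hM m).1.of_le one_le_two) k)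

lemma Tint_eq (hAB : HypAB P) (hM : ∀ n, IsCellM P n (M n)) (ξ : Fin d → ℝ) :
    (∫ y in cube d, ∑ i, ∑ j, ∑ k, ∑ l, P.a 0 y i j k l
        * (∑ n, ξ n * pd2 (M n) k l y) * (∑ m, ξ m * pd2 (M m) i j y))
      = ∑ n, ∑ m, ξ n * ξ m * Aq P M n m := by
  calc (∫ y in cube d, ∑ i, ∑ j, ∑ k, ∑ l, P.a 0 y i j k l
        * (∑ n, ξ n * pd2 (M n) k l y) * (∑ m, ξ m * pd2 (M m) i j y))
      = ∫ y in cube d, ∑ n, ∑ m, ξ n * ξ m *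
          ∑ i, ∑ j, ∑ k, ∑ l, P.a 0 y i j k l * pd2 (M n) k l y * pd2 (M m) i j y := by
        congr 1
        funext y
        simp only [Finset.mul_sum, Finset.sum_mul]
        rw [pull4 (fun i j k l m n => P.a 0 y i j k l * (ξ n * pd2 (M n) k l y)
          * (ξ m * pd2 (M m) i j y)), Finset.sum_comm]
        refine Finset.sum_congr rfl fun n _ => Finset.sum_congr rfl fun m _ =>
          Finset.sum_congr rfl fun i _ => Finset.sum_congr rfl fun j _ =>
          Finset.sum_congr rfl fun k _ => Finset.sum_congr rfl fun l _ => by ring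
    _ = ∑ n, ∫ y in cube d, ∑ m, ξ n * ξ m *
          ∑ i, ∑ j, ∑ k, ∑ l, P.a 0 y i j k l * pd2 (M n) k l y * pd2 (M m) i j y := by
        refine MeasureTheory.integral_finset_sum _ fun n _ =>
          MeasureTheory.integrable_finset_sum _ fun m _ => ?_
        exact (int_Aint hAB hM n m).const_mul _
    _ = ∑ n, ∑ m, ∫ y in cube d, ξ n * ξ m *
          ∑ i, ∑ j, ∑ k, ∑ l, P.a 0 y i j k l * pd2 (M n) k l y * pd2 (M m) i j y := by
        refine Finset.sum_congr rfl fun n _ => ?_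
        exact MeasureTheory.integral_finset_sum _ fun m _ => (int_Aint hAB hM n m).const_mul _
    _ = ∑ n, ∑ m, ξ n * ξ m * Aq P M n m := by
        refine Finset.sum_congr rfl fun n _ => Finset.sum_congr rfl fun m _ => ?_
        rw [MeasureTheory.integral_const_mul]
        rfl

end AuxExpand
section AuxExpandQ

variable {d : ℕ} {P : Coeffs d} {M : Fin d → (Fin d → ℝ) → ℝ}

lemma Qprime_eq (hAB : HypAB P) (hM : ∀ n, IsCellM P n (M n)) (n m : Fin d) :
    (∫ y in cube d, ∑ k, ∑ l, P.b 0 y k l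
        * ((if n = k then (1:ℝ) else 0) + pd (M n) k y)
        * ((if m = l then (1:ℝ) else 0) + pd (M m) l y))
    = bbar P n m + Rq P M n m + Rq P M m n + Bq P M n m := by
  have hptw : ∀ y : Fin d → ℝ, (∑ k, ∑ l, P.b 0 y k l
        * ((if n = k then (1:ℝ) else 0) + pd (M n) k y)
        * ((if m = l then (1:ℝ) else 0) + pd (M m) l y))
      = P.b 0 y n m + (∑ k, P.b 0 y n k * pd (M m) k y)
        + (∑ k, P.b 0 y m k * pd (M n) k y)
        + ∑ i, ∑ j, P.b 0 y i j * pd (M n) j y * pd (M m) i y := by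
    intro y
    have h0 : (∑ k, ∑ l, P.b 0 y k l
          * ((if n = k then (1:ℝ) else 0) + pd (M n) k y)
          * ((if m = l then (1:ℝ) else 0) + pd (M m) l y))
        = P.b 0 y n m + (∑ l, P.b 0 y n l * pd (M m) l y)
          + (∑ k, P.b 0 y k m * pd (M n) k y)
          + ∑ k, ∑ l, P.b 0 y k l * pd (M n) k y * pd (M m) l y := by
      simp only [mul_add, add_mul, Finset.sum_add_distrib, mul_ite, ite_mul, mul_one, one_mul,
        mul_zero, zero_mul, Finset.sum_ite_irrel, Finset.sum_const_zero, Finset.sum_ite_eq,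
        Finset.mem_univ, if_true]
      ring
    have h3 : (∑ k, P.b 0 y k m * pd (M n) k y) = ∑ k, P.b 0 y m k * pd (M n) k y :=
      Finset.sum_congr rfl fun k _ => by rw [hAB.b_symm 0 y]
    have h4 : (∑ k, ∑ l, P.b 0 y k l * pd (M n) k y * pd (M m) l y)
        = ∑ i, ∑ j, P.b 0 y i j * pd (M n) j y * pd (M m) i y := by
      rw [Finset.sum_comm]
      refine Finset.sum_congr rfl fun i _ => Finset.sum_congr rfl fun j _ => ?_
      rw [hAB.b_symm 0 y]
    rw [h0, h3, h4]
  have hI1 := int_b0 hAB n m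
  have hI2 := int_Rint hAB hM n m
  have hI3 := int_Rint hAB hM m n
  have hI4 := int_Bint hAB hM n m
  have hI12 : MeasureTheory.IntegrableOn
      (fun y => P.b 0 y n m + ∑ k, P.b 0 y n k * pd (M m) k y) (cube d) := hI1.add hI2
  have hI123 : MeasureTheory.IntegrableOn
      (fun y => (P.b 0 y n m + ∑ k, P.b 0 y n k * pd (M m) k y)
        + ∑ k, P.b 0 y m k * pd (M n) k y) (cube d) := hI12.add hI3
  calc (∫ y in cube d, ∑ k, ∑ l, P.b 0 y k l
        * ((if n = k then (1:ℝ) else 0) + pd (M n) k y)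
        * ((if m = l then (1:ℝ) else 0) + pd (M m) l y))
      = ∫ y in cube d, (P.b 0 y n m + (∑ k, P.b 0 y n k * pd (M m) k y)
          + (∑ k, P.b 0 y m k * pd (M n) k y)
          + ∑ i, ∑ j, P.b 0 y i j * pd (M n) j y * pd (M m) i y) := by
        congr 1; funext y; exact hptw y
    _ = bbar P n m + Rq P M n m + Rq P M m n + Bq P M n m := by
        rw [MeasureTheory.integral_add hI123 hI4,
          MeasureTheory.integral_add hI12 hI3,
          MeasureTheory.integral_add hI1 hI2]
        rfl

lemma int_Qint (hAB : HypAB P) (hM : ∀ n, IsCellM P n (M n)) (n m : Fin d) :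
    MeasureTheory.IntegrableOn (fun y => ∑ k, ∑ l, P.b 0 y k l
        * ((if n = k then (1:ℝ) else 0) + pd (M n) k y)
        * ((if m = l then (1:ℝ) else 0) + pd (M m) l y)) (cube d) := by
  refine MeasureTheory.integrable_finset_sum _ fun k _ => ?_
  refine MeasureTheory.integrable_finset_sum _ fun l _ => ?_
  have hc : Continuous (fun y => ((if n = k then (1:ℝ) else 0) + pd (M n) k y)
      * ((if m = l then (1:ℝ) else 0) + pd (M m) l y)) :=
    (continuous_const.add (continuous_pd ((hM n).1.of_le one_le_two) k)).mul
      (continuous_const.add (continuous_pd ((hM m).1.of_le one_le_two) l))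
  have := int_b_mul hAB k l hc
  simpa [mul_assoc, IntegrableOn] using this

lemma Qint_eq (hAB : HypAB P) (hM : ∀ n, IsCellM P n (M n)) (ξ : Fin d → ℝ) :
    (∫ y in cube d, ∑ k, ∑ l, P.b 0 y k l
        * (ξ k + ∑ n, ξ n * pd (M n) k y) * (ξ l + ∑ n, ξ n * pd (M n) l y))
      = (∑ n, ∑ m, ξ n * ξ m * bbar P n m) + 2 * (∑ n, ∑ m, ξ n * ξ m * Rq P M n m)
        + ∑ n, ∑ m, ξ n * ξ m * Bq P M n m := by
  have hfac : ∀ (y : Fin d → ℝ) (k : Fin d), (ξ k + ∑ n, ξ n * pd (M n) k y)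
      = ∑ n, ξ n * ((if n = k then (1:ℝ) else 0) + pd (M n) k y) := by
    intro y k
    symm
    simp only [mul_add, Finset.sum_add_distrib, mul_ite, mul_one, mul_zero,
      Finset.sum_ite_eq', Finset.mem_univ, if_true]
  calc (∫ y in cube d, ∑ k, ∑ l, P.b 0 y k l
        * (ξ k + ∑ n, ξ n * pd (M n) k y) * (ξ l + ∑ n, ξ n * pd (M n) l y))
      = ∫ y in cube d, ∑ n, ∑ m, ξ n * ξ m * ∑ k, ∑ l, P.b 0 y k l
          * ((if n = k then (1:ℝ) else 0) + pd (M n) k y)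
          * ((if m = l then (1:ℝ) else 0) + pd (M m) l y) := by
        congr 1
        funext y
        simp only [hfac y]
        simp only [Finset.mul_sum, Finset.sum_mul]
        rw [pull2 (fun k l m n => P.b 0 y k l
          * (ξ n * ((if n = k then (1:ℝ) else 0) + pd (M n) k y))
          * (ξ m * ((if m = l then (1:ℝ) else 0) + pd (M m) l y))), Finset.sum_comm]
        refine Finset.sum_congr rfl fun n _ => Finset.sum_congr rfl fun m _ => ?_
        refine Finset.sum_congr rfl fun k _ => Finset.sum_congr rfl fun l _ => by ring
    _ = ∑ n, ∑ m, ξ n * ξ m * ∫ y in cube d, ∑ k, ∑ l, P.b 0 y k l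
          * ((if n = k then (1:ℝ) else 0) + pd (M n) k y)
          * ((if m = l then (1:ℝ) else 0) + pd (M m) l y) := by
        rw [MeasureTheory.integral_finset_sum _ fun n _ =>
          MeasureTheory.integrable_finset_sum _ fun m _ => (int_Qint hAB hM n m).const_mul _]
        refine Finset.sum_congr rfl fun n _ => ?_
        rw [MeasureTheory.integral_finset_sum _ fun m _ => (int_Qint hAB hM n m).const_mul _]
        exact Finset.sum_congr rfl fun m _ => MeasureTheory.integral_const_mul _ _
    _ = ∑ n, ∑ m, ξ n * ξ m * (bbar P n m + Rq P M n m + Rq P M m n + Bq P M n m) := by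
        refine Finset.sum_congr rfl fun n _ => Finset.sum_congr rfl fun m _ => ?_
        rw [Qprime_eq hAB hM n m]
    _ = (∑ n, ∑ m, ξ n * ξ m * bbar P n m) + 2 * (∑ n, ∑ m, ξ n * ξ m * Rq P M n m)
        + ∑ n, ∑ m, ξ n * ξ m * Bq P M n m := by
        have hsw : (∑ n, ∑ m, ξ n * ξ m * Rq P M m n)
            = ∑ n, ∑ m, ξ n * ξ m * Rq P M n m := by
          rw [Finset.sum_comm]
          exact Finset.sum_congr rfl fun n _ => Finset.sum_congr rfl fun m _ => by ring
        simp only [mul_add, Finset.sum_add_distrib]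
        rw [hsw]
        ring
end AuxExpandQ
section Final

variable {d : ℕ} {P : Coeffs d} {M : Fin d → (Fin d → ℝ) → ℝ}

lemma sum_beff_eq (hAB : HypAB P) (hM : ∀ n, IsCellM P n (M n)) (ξ : Fin d → ℝ) :
    ∑ i, ∑ j, Beff P M i j * ξ i * ξ j
    = (∫ y in cube d, ∑ k, ∑ l, P.b 0 y k l
        * (ξ k + ∑ n, ξ n * pd (M n) k y) * (ξ l + ∑ n, ξ n * pd (M n) l y))
      + ∫ y in cube d, ∑ i, ∑ j, ∑ k, ∑ l, P.a 0 y i j k l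
          * (∑ n, ξ n * pd2 (M n) k l y) * (∑ m, ξ m * pd2 (M m) i j y) := by
  rw [Qint_eq hAB hM ξ, Tint_eq hAB hM ξ]
  have h1 : ∀ i j : Fin d, Beff P M i j * ξ i * ξ j
      = ξ i * ξ j * bbar P i j + ξ i * ξ j * Rq P M i j := by
    intro i j; rw [beff_split hAB hM]; ring
  have h2 : ∀ n m : Fin d, ξ n * ξ m * Aq P M n m
      = -(ξ n * ξ m * Bq P M n m) + -(ξ n * ξ m * Rq P M n m) := by
    intro n m
    have hc := cell_id hM n m
    have : Aq P M n m = -(Bq P M n m) + -(Rq P M n m) := by linarith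
    rw [this]; ring
  simp only [h1, h2, Finset.sum_add_distrib, Finset.sum_neg_distrib]
  ring

lemma Tint_nonneg (hAB : HypAB P) (ξ : Fin d → ℝ) :
    0 ≤ ∫ y in cube d, ∑ i, ∑ j, ∑ k, ∑ l, P.a 0 y i j k l
        * (∑ n, ξ n * pd2 (M n) k l y) * (∑ m, ξ m * pd2 (M m) i j y) := by
  refine MeasureTheory.setIntegral_nonneg (measurableSet_cube d) fun y _ => ?_
  have hell := hAB.a_ell 0 y (fun k l => ∑ n, ξ n * pd2 (M n) k l y)
  have hre : (∑ i, ∑ j, ∑ k, ∑ l, P.a 0 y i j k l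
        * (∑ n, ξ n * pd2 (M n) k l y) * (∑ m, ξ m * pd2 (M m) i j y))
      = ∑ i, ∑ j, ∑ k, ∑ l, P.a 0 y i j k l
        * ((fun k l => ∑ n, ξ n * pd2 (M n) k l y) i j)
        * ((fun k l => ∑ n, ξ n * pd2 (M n) k l y) k l) := by
    refine Finset.sum_congr rfl fun i _ => Finset.sum_congr rfl fun j _ =>
      Finset.sum_congr rfl fun k _ => Finset.sum_congr rfl fun l _ => by simp; ring
  rw [hre]
  have hnn : 0 ≤ P.Λ * ∑ i, ∑ j, ((fun k l => ∑ n, ξ n * pd2 (M n) k l y) i j) ^ 2 := by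
    apply mul_nonneg hAB.Λpos.le
    exact Finset.sum_nonneg fun i _ => Finset.sum_nonneg fun j _ => sq_nonneg _
  exact le_trans hnn hell

end Final
section Final2

variable {d : ℕ} {P : Coeffs d} {M : Fin d → (Fin d → ℝ) → ℝ}

lemma Qint_lower (hd : 1 ≤ d) (hAB : HypAB P) {Λ' : ℝ} (hH5 : HypB P Λ')
    (hM : ∀ n, IsCellM P n (M n)) (ξ : Fin d → ℝ) :
    Λ' * (∑ i, ξ i ^ 2) ≤ ∫ y in cube d, ∑ k, ∑ l, P.b 0 y k l
        * (ξ k + ∑ n, ξ n * pd (M n) k y) * (ξ l + ∑ n, ξ n * pd (M n) l y) := by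
  have hMc : ∀ n, ContDiff ℝ 1 (M n) := fun n => (hM n).1.of_le one_le_two
  have hVc : ∀ k : Fin d, Continuous fun y => ξ k + ∑ n, ξ n * pd (M n) k y := by
    intro k
    exact continuous_const.add (continuous_finset_sum _ fun n _ =>
      continuous_const.mul (continuous_pd (hMc n) k))
  -- pointwise ellipticity
  have hptw : ∀ y ∈ cube d, Λ' * (∑ k, (ξ k + ∑ n, ξ n * pd (M n) k y) ^ 2)
      ≤ ∑ k, ∑ l, P.b 0 y k l
        * (ξ k + ∑ n, ξ n * pd (M n) k y) * (ξ l + ∑ n, ξ n * pd (M n) l y) := by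
    intro y _
    have := hH5.2 0 y fun k => ξ k + ∑ n, ξ n * pd (M n) k y
    simpa using this
  have hint1 : MeasureTheory.IntegrableOn
      (fun y => Λ' * (∑ k, (ξ k + ∑ n, ξ n * pd (M n) k y) ^ 2)) (cube d) :=
    integrableOn_cube_cont (continuous_const.mul
      (continuous_finset_sum _ fun k _ => (hVc k).pow 2))
  have hint2 : MeasureTheory.IntegrableOn
      (fun y => ∑ k, ∑ l, P.b 0 y k l
        * (ξ k + ∑ n, ξ n * pd (M n) k y) * (ξ l + ∑ n, ξ n * pd (M n) l y)) (cube d) := by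
    refine MeasureTheory.integrable_finset_sum _ fun k _ =>
      MeasureTheory.integrable_finset_sum _ fun l _ => ?_
    have := int_b_mul hAB k l ((hVc k).mul (hVc l))
    simpa [mul_assoc, IntegrableOn] using this
  refine le_trans ?_ (MeasureTheory.setIntegral_mono_on hint1 hint2
    (measurableSet_cube d) hptw)
  -- compute/lower-bound the left integral
  rw [MeasureTheory.integral_const_mul]
  have hsplit : (∫ y in cube d, ∑ k, (ξ k + ∑ n, ξ n * pd (M n) k y) ^ 2)
      = ∑ k, ∫ y in cube d, (ξ k + ∑ n, ξ n * pd (M n) k y) ^ 2 :=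
    MeasureTheory.integral_finset_sum _ fun k _ =>
      integrableOn_cube_cont ((hVc k).pow 2)
  rw [hsplit]
  have hVk : ∀ k : Fin d, ξ k ^ 2 ≤ ∫ y in cube d, (ξ k + ∑ n, ξ n * pd (M n) k y) ^ 2 := by
    intro k
    have hGc : Continuous fun y => ∑ n, ξ n * pd (M n) k y :=
      continuous_finset_sum _ fun n _ => continuous_const.mul (continuous_pd (hMc n) k)
    have hexp : (fun y => (ξ k + ∑ n, ξ n * pd (M n) k y) ^ 2)
        = fun y => (ξ k ^ 2 + (2 * ξ k) * (∑ n, ξ n * pd (M n) k y))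
            + (∑ n, ξ n * pd (M n) k y) ^ 2 := by
      funext y; ring
    have hi1 : MeasureTheory.IntegrableOn (fun _ : Fin d → ℝ => ξ k ^ 2) (cube d) :=
      integrableOn_cube_cont continuous_const
    have hi2 : MeasureTheory.IntegrableOn
        (fun y => (2 * ξ k) * (∑ n, ξ n * pd (M n) k y)) (cube d) :=
      integrableOn_cube_cont (continuous_const.mul hGc)
    have hi12 : MeasureTheory.IntegrableOn
        (fun y => ξ k ^ 2 + (2 * ξ k) * (∑ n, ξ n * pd (M n) k y)) (cube d) := hi1.add hi2
    have hi3 : MeasureTheory.IntegrableOn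
        (fun y => (∑ n, ξ n * pd (M n) k y) ^ 2) (cube d) :=
      integrableOn_cube_cont (hGc.pow 2)
    rw [hexp, MeasureTheory.integral_add hi12 hi3, MeasureTheory.integral_add hi1 hi2]
    have e1 : (∫ _ in cube d, ξ k ^ 2) = ξ k ^ 2 := by
      rw [MeasureTheory.setIntegral_const, Measure.real, volume_cube]
      simp
    have e2 : (∫ y in cube d, (2 * ξ k) * (∑ n, ξ n * pd (M n) k y)) = 0 := by
      rw [MeasureTheory.integral_const_mul]
      have : (∫ y in cube d, ∑ n, ξ n * pd (M n) k y) = 0 := by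
        rw [MeasureTheory.integral_finset_sum _ fun n _ =>
          (integrableOn_cube_cont (continuous_const.mul (continuous_pd (hMc n) k)) :
            Integrable (fun y => ξ n * pd (M n) k y) (volume.restrict (cube d)))]
        refine Finset.sum_eq_zero fun n _ => ?_
        rw [MeasureTheory.integral_const_mul,
          integral_pd_cube_zero hd (hM n).1 (hM n).2.1 k, mul_zero]
      rw [this, mul_zero]
    have e3 : 0 ≤ ∫ y in cube d, (∑ n, ξ n * pd (M n) k y) ^ 2 :=
      MeasureTheory.setIntegral_nonneg (measurableSet_cube d) fun y _ => sq_nonneg _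
    rw [e1, e2]
    linarith
  have hsum : (∑ k, ξ k ^ 2)
      ≤ ∑ k, ∫ y in cube d, (ξ k + ∑ n, ξ n * pd (M n) k y) ^ 2 :=
    Finset.sum_le_sum fun k _ => hVk k
  have hΛ : 0 ≤ Λ' := hH5.1.le
  exact mul_le_mul_of_nonneg_left hsum hΛ

end Final2
/-- Lemma 4.1: the effective matrix `b^eff` built from the fourth-order cell correctors
is symmetric and coercive on `ℝ^d`. -/
theorem statement18 {d : ℕ} (hd : 1 ≤ d) (P : Coeffs d)
    (hAB : HypAB P) (Λ' : ℝ) (hH5 : HypB P Λ')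
    (M : Fin d → (Fin d → ℝ) → ℝ) (hM : ∀ n, IsCellM P n (M n)) :
    (∀ i j,
      (∫ y in cube d, ∑ k, P.b 0 y i k * ((if k = j then (1:ℝ) else 0) + pd (M j) k y)) =
      (∫ y in cube d, ∑ k, P.b 0 y j k * ((if k = i then (1:ℝ) else 0) + pd (M i) k y))) ∧
    ∃ C > (0:ℝ), ∀ ξ : Fin d → ℝ,
      C * (∑ i, ξ i ^ 2) ≤ ∑ i, ∑ j,
        (∫ y in cube d, ∑ k, P.b 0 y i k * ((if k = j then (1:ℝ) else 0) + pd (M j) k y))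
          * ξ i * ξ j := by
  constructor
  · intro i j
    exact Beff_symm hAB hM i j
  · refine ⟨Λ', hH5.1, fun ξ => ?_⟩
    show Λ' * (∑ i, ξ i ^ 2) ≤ ∑ i, ∑ j, Beff P M i j * ξ i * ξ j
    rw [sum_beff_eq hAB hM ξ]
    have h1 := Qint_lower hd hAB hH5 hM ξ
    have h2 := Tint_nonneg hAB (M := M) ξ
    linarith


end
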